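/- arXiv:1407.5122 — 2 statements merged into one kernel-verified Lean document; each statement's English description precedes it below -/
import Mathlib

section
/- Let m ≥ 2 and let Δ : [1, 3m-2] → {0,1} be a 2-coloring such that Δ⁻¹(1) ∩ [1,3m-2] has more than m elements, and suppose there is no monochromatic m-subset B' with max(B') < 3m-2 and diam(B') ≥ 2m-2. Then the second-largest element of [1,3m-2] colored 1 is at most 2m-3 plus the smallest element colored 1. -/
open Finset

/-- diameter of a finite set of naturals: max - min (0 for ∅). -/
def diam (X : Finset ℕ) : ℕ := X.max.unbotD 0 - X.min.untopD 0

/-- B is monochromatic under Δ. -/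
def Mono (Δ : ℕ → Fin 2) (B : Finset ℕ) : Prop := ∃ c, ∀ x ∈ B, Δ x = c

/-- X <_p Y : every element of X precedes every element of Y. -/
def PLt (X Y : Finset ℕ) : Prop := ∀ x ∈ X, ∀ y ∈ Y, x < y

theorem stmt8 (m : ℕ) (hm : 2 ≤ m) (Δ : ℕ → Fin 2)
    (hmany : m < ((Finset.Icc 1 (3 * m - 2)).filter (fun x => Δ x = 1)).card)
    (h : ¬ ∃ B' : Finset ℕ, B' ⊆ Finset.Icc 1 (3 * m - 2) ∧ B'.card = m ∧ Mono Δ B' ∧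
      (∀ x ∈ B', x < 3 * m - 2) ∧ 2 * m - 2 ≤ diam B') :
    ∀ x ∈ (Finset.Icc 1 (3 * m - 2)).filter (fun x => Δ x = 1),
      x ≠ ((Finset.Icc 1 (3 * m - 2)).filter (fun x => Δ x = 1)).max.unbotD 0 →
      x ≤ 2 * m - 3 + ((Finset.Icc 1 (3 * m - 2)).filter (fun x => Δ x = 1)).min.untopD 0 := by
  intro x hx hxne
  by_contra hcon
  push_neg at hcon
  set S := (Finset.Icc 1 (3 * m - 2)).filter (fun x => Δ x = 1) with hSdef
  have hne : S.Nonempty := Finset.card_pos.mp (by omega)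
  have hmax : S.max.unbotD 0 = S.max' hne := by rw [← Finset.coe_max' hne]; rfl
  have hmin : S.min.untopD 0 = S.min' hne := by rw [← Finset.coe_min' hne]; rfl
  rw [hmax] at hxne
  rw [hmin] at hcon
  set M := S.max' hne with hM
  set μ := S.min' hne with hμ
  have hMS : M ∈ S := S.max'_mem hne
  have hμS : μ ∈ S := S.min'_mem hne
  have hxM : x < M := lt_of_le_of_ne (S.le_max' x hx) hxne
  have hμx : μ ≤ x := S.min'_le x hx
  have hsub : ({μ, x} : Finset ℕ) ⊆ S.erase M := by
    intro y hy
    simp only [Finset.mem_insert, Finset.mem_singleton] at hy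
    rcases hy with rfl | rfl
    · exact Finset.mem_erase.mpr ⟨by omega, hμS⟩
    · exact Finset.mem_erase.mpr ⟨by omega, hx⟩
  have hcard2 : ({μ, x} : Finset ℕ).card ≤ m :=
    le_trans (Finset.card_insert_le _ _) (by simp; omega)
  have hcardT : m ≤ (S.erase M).card := by
    rw [Finset.card_erase_of_mem hMS]; omega
  obtain ⟨B, hBsub, hBT, hBcard⟩ :=
    Finset.exists_subsuperset_card_eq hsub hcard2 hcardT
  have hμB : μ ∈ B := hBsub (by simp)
  have hxB : x ∈ B := hBsub (by simp)
  have hBS : B ⊆ S := hBT.trans (Finset.erase_subset _ _)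
  have hBne : B.Nonempty := ⟨x, hxB⟩
  have hM32 : M ≤ 3 * m - 2 := by
    have := (Finset.mem_filter.mp hMS).1
    exact (Finset.mem_Icc.mp this).2
  apply h
  refine ⟨B, hBS.trans (Finset.filter_subset _ _), hBcard, ⟨1, ?_⟩, ?_, ?_⟩
  · intro y hy
    exact (Finset.mem_filter.mp (hBS hy)).2
  · intro y hy
    have hyM : y ≠ M := (Finset.mem_erase.mp (hBT hy)).1
    have : y ≤ M := S.le_max' y (hBS hy)
    omega
  · have hBmax : diam B = B.max' hBne - B.min' hBne := by
      unfold diam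
      rw [← Finset.coe_max' hBne, ← Finset.coe_min' hBne]; rfl
    have h1 : x ≤ B.max' hBne := B.le_max' x hxB
    have h2 : B.min' hBne ≤ μ := B.min'_le μ hμB
    have h3 : μ ≤ B.min' hBne := S.min'_le _ (hBS (B.min'_mem hBne))
    omega
end

section
/- Let m ≥ 2 and let Δ : [1, 3m-2] → {0,1} be a 2-coloring. Then there exist monochromatic m-subsets A, C ⊆ [1, 3m-2] with max(A) ≤ max(C), diam(A) ≤ diam(C), and diam(A) ≤ 2m-2 ≤ diam(C), OR there exist monochromatic m-subsets D₁ <_p D₂ ⊆ [1,3m-2] with diam(D₁) = diam(D₂) = m-1. -/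
open Finset

lemma diam_eq (X : Finset ℕ) (h : X.Nonempty) : diam X = X.max' h - X.min' h := by
  unfold diam
  rw [← Finset.coe_max' h, ← Finset.coe_min' h]
  rfl

lemma le_diam {X : Finset ℕ} {x y : ℕ} (hx : x ∈ X) (hy : y ∈ X) : y - x ≤ diam X := by
  have hne : X.Nonempty := ⟨x, hx⟩
  rw [diam_eq X hne]
  have h1 := Finset.le_max' X y hy
  have h2 := Finset.min'_le X x hx
  omega

lemma diam_le_of_subset_Icc {X : Finset ℕ} {a b : ℕ} (h : X ⊆ Finset.Icc a b)
    (hne : X.Nonempty) : diam X ≤ b - a := by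
  rw [diam_eq X hne]
  have h1 := h (X.max'_mem hne)
  have h2 := h (X.min'_mem hne)
  simp only [Finset.mem_Icc] at h1 h2
  omega

lemma diam_Icc {a b : ℕ} (h : a ≤ b) : diam (Finset.Icc a b) = b - a := by
  have hne : (Finset.Icc a b).Nonempty := Finset.nonempty_Icc.2 h
  have h1 : b - a ≤ diam (Finset.Icc a b) :=
    le_diam (Finset.mem_Icc.2 ⟨le_refl a, h⟩) (Finset.mem_Icc.2 ⟨h, le_refl b⟩)
  have h2 := diam_le_of_subset_Icc (Finset.Subset.refl _) hne
  omega

theorem stmt10 (m : ℕ) (hm : 2 ≤ m) (Δ : ℕ → Fin 2) :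
    (∃ A C : Finset ℕ, A ⊆ Finset.Icc 1 (3 * m - 2) ∧ C ⊆ Finset.Icc 1 (3 * m - 2) ∧
      A.card = m ∧ C.card = m ∧ Mono Δ A ∧ Mono Δ C ∧
      A.max ≤ C.max ∧ diam A ≤ diam C ∧ diam A ≤ 2 * m - 2 ∧ 2 * m - 2 ≤ diam C) ∨
    (∃ D₁ D₂ : Finset ℕ, D₁ ⊆ Finset.Icc 1 (3 * m - 2) ∧ D₂ ⊆ Finset.Icc 1 (3 * m - 2) ∧
      D₁.card = m ∧ D₂.card = m ∧ Mono Δ D₁ ∧ Mono Δ D₂ ∧ PLt D₁ D₂ ∧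
      diam D₁ = m - 1 ∧ diam D₂ = m - 1) := by
  set N := 3 * m - 2 with hN
  have fin2 : ∀ a b c : Fin 2, a ≠ b → c = a ∨ c = b := by decide
  by_cases hcase : ∃ C : Finset ℕ, C ⊆ Finset.Icc 1 N ∧ C.card = m ∧ Mono Δ C ∧
      2 * m - 2 ≤ diam C
  · -- Case 1
    obtain ⟨C, hCsub, hCcard, hCmono, hCdiam⟩ := hcase
    -- pigeonhole on Icc 1 (2m-1)
    set I := Finset.Icc 1 (2 * m - 1) with hI
    have hIcard : I.card = 2 * m - 1 := by rw [hI, Nat.card_Icc]; omega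
    have hsplit : ∀ T : Finset ℕ, (T.filter (fun x => Δ x = 0)).card
        + (T.filter (fun x => Δ x = 1)).card = T.card := by
      intro T
      rw [← Finset.card_filter_add_card_filter_not (p := fun x => Δ x = 0) (s := T)]
      congr 1
      refine congrArg Finset.card (Finset.filter_congr ?_)
      intro x _
      constructor
      · intro h; rw [h]; decide
      · intro h; exact (fin2 0 1 (Δ x) (by decide)).resolve_left h
    have hsum : (I.filter (fun x => Δ x = 0)).card + (I.filter (fun x => Δ x = 1)).card
        = 2 * m - 1 := by rw [hsplit, hIcard]
    have hex : ∃ c : Fin 2, m ≤ (I.filter (fun x => Δ x = c)).card := by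
      by_contra hcon
      push_neg at hcon
      have h0 := hcon 0
      have h1 := hcon 1
      omega
    obtain ⟨c, hc⟩ := hex
    obtain ⟨A, hAsub, hAcard⟩ := Finset.exists_subset_card_eq hc
    have hAI : A ⊆ I := hAsub.trans (Finset.filter_subset _ _)
    have hAne : A.Nonempty := by rw [← Finset.card_pos, hAcard]; omega
    have hCne : C.Nonempty := by rw [← Finset.card_pos, hCcard]; omega
    have hAIcc : A ⊆ Finset.Icc 1 N := by
      refine hAI.trans ?_
      apply Finset.Icc_subset_Icc le_rfl
      omega
    -- bounds on C's max
    have hCmin : 1 ≤ C.min' hCne := by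
      have := hCsub (C.min'_mem hCne)
      simp only [Finset.mem_Icc] at this; exact this.1
    have hCdi : diam C = C.max' hCne - C.min' hCne := diam_eq C hCne
    have hCmax : 2 * m - 1 ≤ C.max' hCne := by omega
    have hAmax : A.max' hAne ≤ 2 * m - 1 := by
      have := hAI (A.max'_mem hAne)
      simp only [hI, Finset.mem_Icc] at this; exact this.2
    refine Or.inl ⟨A, C, hAIcc, hCsub, hAcard, hCcard, ⟨c, fun x hx => by
        have := hAsub hx; simp only [Finset.mem_filter] at this; exact this.2⟩, hCmono,
      ?_, ?_, ?_, hCdiam⟩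
    · rw [← Finset.coe_max' hAne, ← Finset.coe_max' hCne]
      exact_mod_cast hAmax.trans hCmax
    · have hA2 : diam A ≤ 2 * m - 2 := by
        have := diam_le_of_subset_Icc hAI hAne
        omega
      omega
    · have := diam_le_of_subset_Icc hAI hAne
      omega
  · -- Case 2
    push_neg at hcase
    set S : Fin 2 → Finset ℕ := fun c => (Finset.Icc 1 N).filter (fun x => Δ x = c) with hS
    have hNcard : (Finset.Icc 1 N).card = N := by rw [Nat.card_Icc]; omega
    have hNge : 2 * m ≤ N + 1 := by omega
    have hsplit : ∀ T : Finset ℕ, (T.filter (fun x => Δ x = 0)).card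
        + (T.filter (fun x => Δ x = 1)).card = T.card := by
      intro T
      rw [← Finset.card_filter_add_card_filter_not (p := fun x => Δ x = 0) (s := T)]
      congr 1
      refine congrArg Finset.card (Finset.filter_congr ?_)
      intro x _
      constructor
      · intro h; rw [h]; decide
      · intro h; exact (fin2 0 1 (Δ x) (by decide)).resolve_left h
    have hsum : (S 0).card + (S 1).card = N := by
      rw [hS]; simp only; rw [hsplit, hNcard]
    -- key span lemma
    have key : ∀ c : Fin 2, m ≤ (S c).card → ∀ x ∈ S c, ∀ y ∈ S c, y - x ≤ 2 * m - 3 := by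
      intro c hc x hx y hy
      by_contra hcon
      have hxy : x + (2 * m - 2) ≤ y := by omega
      have hxny : x ≠ y := by omega
      have hpair : ({x, y} : Finset ℕ) ⊆ S c := by
        intro z hz
        simp only [Finset.mem_insert, Finset.mem_singleton] at hz
        rcases hz with rfl | rfl
        · exact hx
        · exact hy
      have hpaircard : ({x, y} : Finset ℕ).card = 2 := Finset.card_pair hxny
      obtain ⟨C, hC1, hC2, hC3⟩ := Finset.exists_subsuperset_card_eq hpair
        (by omega) hc
      have hCsub : C ⊆ Finset.Icc 1 N := hC2.trans (Finset.filter_subset _ _)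
      have hxC : x ∈ C := hC1 (by simp)
      have hyC : y ∈ C := hC1 (by simp)
      have hdiam : 2 * m - 2 ≤ diam C := le_trans (by omega) (le_diam hxC hyC)
      have := hcase C hCsub hC3 ⟨c, fun z hz => by
        have := hC2 hz; simp only [hS, Finset.mem_filter] at this; exact this.2⟩
      omega
    -- some color has ≥ m elements
    have hex : ∃ c : Fin 2, m ≤ (S c).card := by
      by_contra hcon
      push_neg at hcon
      have h0 := hcon 0
      have h1 := hcon 1
      omega
    obtain ⟨c₀, hc₀⟩ := hex
    -- S c₀ has small span hence ≤ 2m-2 elements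
    have hc₀ne : (S c₀).Nonempty := by rw [← Finset.card_pos]; omega
    have hc₀card : (S c₀).card ≤ 2 * m - 2 := by
      set a := (S c₀).min' hc₀ne with ha
      have hsub : S c₀ ⊆ Finset.Icc a (a + (2 * m - 3)) := by
        intro z hz
        simp only [Finset.mem_Icc]
        refine ⟨Finset.min'_le _ _ hz, ?_⟩
        have := key c₀ hc₀ a ((S c₀).min'_mem hc₀ne) z hz
        omega
      have := Finset.card_le_card hsub
      rw [Nat.card_Icc] at this
      omega
    -- both colors have ≥ m elements
    have hboth : ∀ c : Fin 2, m ≤ (S c).card := by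
      intro c
      rcases fin2 0 1 c (by decide) with rfl | rfl
      · rcases fin2 0 1 c₀ (by decide) with rfl | rfl
        · exact hc₀
        · omega
      · rcases fin2 0 1 c₀ (by decide) with rfl | rfl
        · omega
        · exact hc₀
    have h1mem : (1 : ℕ) ∈ Finset.Icc 1 N := Finset.mem_Icc.2 ⟨le_rfl, by omega⟩
    have hNmem : N ∈ Finset.Icc 1 N := Finset.mem_Icc.2 ⟨by omega, le_rfl⟩
    have h1S : (1 : ℕ) ∈ S (Δ 1) := Finset.mem_filter.2 ⟨h1mem, rfl⟩
    have hNS : N ∈ S (Δ N) := Finset.mem_filter.2 ⟨hNmem, rfl⟩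
    have huv : Δ 1 ≠ Δ N := by
      intro h
      have := key (Δ N) (hboth _) 1 (h ▸ h1S) N hNS
      omega
    -- all of [1,m] is color Δ 1
    have hD1 : ∀ x ∈ Finset.Icc 1 m, Δ x = Δ 1 := by
      intro x hx
      simp only [Finset.mem_Icc] at hx
      rcases fin2 (Δ 1) (Δ N) (Δ x) huv with h | h
      · exact h
      · exfalso
        have hxS : x ∈ S (Δ N) := Finset.mem_filter.2
          ⟨Finset.mem_Icc.2 ⟨hx.1, by omega⟩, h⟩
        have := key (Δ N) (hboth _) x hxS N hNS
        omega
    -- all of [2m-1, N] is color Δ N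
    have hD2 : ∀ x ∈ Finset.Icc (2 * m - 1) N, Δ x = Δ N := by
      intro x hx
      simp only [Finset.mem_Icc] at hx
      rcases fin2 (Δ 1) (Δ N) (Δ x) huv with h | h
      · exfalso
        have hxS : x ∈ S (Δ 1) := Finset.mem_filter.2
          ⟨Finset.mem_Icc.2 ⟨by omega, hx.2⟩, h⟩
        have := key (Δ 1) (hboth _) 1 h1S x hxS
        omega
      · exact h
    refine Or.inr ⟨Finset.Icc 1 m, Finset.Icc (2 * m - 1) N, ?_, ?_, ?_, ?_,
      ⟨Δ 1, hD1⟩, ⟨Δ N, hD2⟩, ?_, ?_, ?_⟩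
    · exact Finset.Icc_subset_Icc le_rfl (by omega)
    · exact Finset.Icc_subset_Icc (by omega) le_rfl
    · rw [Nat.card_Icc]; omega
    · rw [Nat.card_Icc]; omega
    · intro x hx y hy
      simp only [Finset.mem_Icc] at hx hy
      omega
    · rw [diam_Icc (by omega)]
    · rw [diam_Icc (by omega)]; omega
end
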